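/- In the ring ℤ[α] (the subring of ℝ generated by 1/2 and α = sin(2π/9)), the principal ideal (α) is maximal and the quotient ring ℤ[α]/(α) is isomorphic to ℤ/3ℤ. Consequently, for q ∈ ℤ[1/2,1/α] and k ≥ 1 a denominator exponent of q, k is the least denominator exponent of q if and only if the image of α^k·q in ℤ[α]/(α) is nonzero. -/

import Mathlib

open Matrix Complex

noncomputable section

/-- ω = exp(2πi/3), a primitive third root of unity. -/
def ω : ℂ := exp (2 * Real.pi * I / 3)

/-- ζ = exp(2πi/9), a primitive ninth root of unity. -/
def ζ : ℂ := exp (2 * Real.pi * I / 9)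

/-- The qutrit Pauli X matrix. -/
def Xmat : Matrix (Fin 3) (Fin 3) ℂ := !![0,0,1; 1,0,0; 0,1,0]

/-- The qutrit Pauli Z matrix. -/
def Zmat : Matrix (Fin 3) (Fin 3) ℂ := !![1,0,0; 0,ω,0; 0,0,ω^2]

/-- The qutrit Hadamard matrix H = (1/(i√3))·[[1,1,1],[1,ω,ω²],[1,ω²,ω]]. -/
def Hmat : Matrix (Fin 3) (Fin 3) ℂ :=
  (I * (Real.sqrt 3 : ℂ))⁻¹ • !![1,1,1; 1,ω,ω^2; 1,ω^2,ω]

/-- The qutrit phase matrix S = ζ⁸·diag(1,1,ω). -/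
def Smat : Matrix (Fin 3) (Fin 3) ℂ := ζ^8 • !![1,0,0; 0,1,0; 0,0,ω]

/-- The qutrit T matrix T = diag(1,ζ,ζ⁸). -/
def Tmat : Matrix (Fin 3) (Fin 3) ℂ := !![1,0,0; 0,ζ,0; 0,0,ζ^8]

lemma omega_ne_zero : ω ≠ 0 := Complex.exp_ne_zero _
lemma zeta_ne_zero : ζ ≠ 0 := Complex.exp_ne_zero _

lemma omega_im_pos : 0 < ω.im := by
  have h : ω = Complex.exp ((2 * Real.pi / 3 : ℝ) * I) := by
    rw [ω]; push_cast; ring_nf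
  rw [h, Complex.exp_ofReal_mul_I_im]
  apply Real.sin_pos_of_pos_of_lt_pi
  · positivity
  · nlinarith [Real.pi_pos]

lemma omega_ne_one : ω ≠ 1 := by
  intro h
  have := omega_im_pos
  rw [h] at this
  simp at this

lemma omega_cube : ω ^ 3 = 1 := by
  rw [ω, ← Complex.exp_nat_mul]
  rw [show (3:ℕ) * (2 * Real.pi * I / 3) = 2 * Real.pi * I by push_cast; ring]
  exact Complex.exp_two_pi_mul_I

lemma detX : Xmat.det ≠ 0 := by
  simp [Xmat, Matrix.det_fin_three]

lemma detZ : Zmat.det ≠ 0 := by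
  simp [Zmat, Matrix.det_fin_three, omega_ne_zero]

lemma detS : Smat.det ≠ 0 := by
  simp [Smat, Matrix.det_fin_three, omega_ne_zero, zeta_ne_zero]

lemma detT : Tmat.det ≠ 0 := by
  simp [Tmat, Matrix.det_fin_three, zeta_ne_zero]

lemma detH : Hmat.det ≠ 0 := by
  rw [Hmat, Matrix.det_smul]
  apply mul_ne_zero
  · apply pow_ne_zero
    apply inv_ne_zero
    apply mul_ne_zero Complex.I_ne_zero
    simp [Complex.ofReal_ne_zero]
  · rw [Matrix.det_fin_three]
    simp [Matrix.vecHead, Matrix.vecTail]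
    intro h
    have h3 : ω ^ 3 = 1 := omega_cube
    have key : 3 * ω * (ω - 1) = 0 := by linear_combination h + ω * h3
    rcases mul_eq_zero.mp key with h' | h'
    · rcases mul_eq_zero.mp h' with h'' | h''
      · norm_num at h''
      · exact omega_ne_zero h''
    · exact omega_ne_one (by linear_combination h')

/-- X as an element of GL(3, ℂ). -/
def Xg : GL (Fin 3) ℂ := Matrix.GeneralLinearGroup.mkOfDetNeZero Xmat detX

/-- Z as an element of GL(3, ℂ). -/
def Zg : GL (Fin 3) ℂ := Matrix.GeneralLinearGroup.mkOfDetNeZero Zmat detZ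

/-- H as an element of GL(3, ℂ). -/
def Hg : GL (Fin 3) ℂ := Matrix.GeneralLinearGroup.mkOfDetNeZero Hmat detH

/-- S as an element of GL(3, ℂ). -/
def Sg : GL (Fin 3) ℂ := Matrix.GeneralLinearGroup.mkOfDetNeZero Smat detS

/-- T as an element of GL(3, ℂ). -/
def Tg : GL (Fin 3) ℂ := Matrix.GeneralLinearGroup.mkOfDetNeZero Tmat detT

/-- The Clifford group 𝒞: the subgroup of GL(3,ℂ) generated by H and S. -/
def Cliff : Subgroup (GL (Fin 3) ℂ) := Subgroup.closure {Hg, Sg}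

/-- The Clifford+T group: the subgroup of GL(3,ℂ) generated by H, S and T. -/
def CliffT : Subgroup (GL (Fin 3) ℂ) := Subgroup.closure {Hg, Sg, Tg}

/-- The subgroup 𝒮 of GL(3,ℂ) generated by S and X. -/
def Sgrp : Subgroup (GL (Fin 3) ℂ) := Subgroup.closure {Sg, Xg}

/-- Letters of words over the alphabet {H, S, T}. -/
inductive Letter : Type
  | H : Letter
  | S : Letter
  | T : Letter
  deriving DecidableEq

/-- The gate associated to a letter. -/
def Letter.g : Letter → GL (Fin 3) ℂ
  | .H => Hg
  | .S => Sg
  | .T => Tg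

/-- The product of the letters of a word. -/
def wordProd (w : List Letter) : GL (Fin 3) ℂ := (w.map Letter.g).prod

/-- The allowed prefixes of a canonical form: ε, T, H²T. -/
def Prefixes : Set (List Letter) := {[], [.T], [.H, .H, .T]}

/-- The allowed syllables of a canonical form: HT, H³T, SHT, SH³T, S²HT, S²H³T. -/
def Syllables : Set (List Letter) :=
  {[.H, .T], [.H, .H, .H, .T], [.S, .H, .T],
   [.S, .H, .H, .H, .T], [.S, .S, .H, .T], [.S, .S, .H, .H, .H, .T]}

/-- The T-count of a canonical form with prefix `p` and syllable list `ss`: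
`k` if the prefix is empty and `k+1` otherwise, where `k` is the number of syllables. -/
def TCount (p : List Letter) (ss : List (List Letter)) : ℕ :=
  ss.length + (if p = [] then 0 else 1)

/-- P₊ = (P + P²)/√6. -/
def Pplus (P : Matrix (Fin 3) (Fin 3) ℂ) : Matrix (Fin 3) (Fin 3) ℂ :=
  ((Real.sqrt 6 : ℂ))⁻¹ • (P + P ^ 2)

/-- P₋ = i(P − P²)/√6. -/
def Pminus (P : Matrix (Fin 3) (Fin 3) ℂ) : Matrix (Fin 3) (Fin 3) ℂ :=
  (I * ((Real.sqrt 6 : ℂ))⁻¹) • (P - P ^ 2)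

/-- The ordered tuple (Q₁, …, Q₈) = (Z₊, X₊, (XZ)₊, (XZ²)₊, Z₋, X₋, (XZ)₋, (XZ²)₋). -/
def Q : Fin 8 → Matrix (Fin 3) (Fin 3) ℂ :=
  ![Pplus Zmat, Pplus Xmat, Pplus (Xmat * Zmat), Pplus (Xmat * Zmat ^ 2),
    Pminus Zmat, Pminus Xmat, Pminus (Xmat * Zmat), Pminus (Xmat * Zmat ^ 2)]

/-- The adjoint representation Û of U, the 8×8 real matrix with
entries Û_{ij} = tr(Qᵢ U Qⱼ U†). -/
def adj (U : Matrix (Fin 3) (Fin 3) ℂ) : Matrix (Fin 8) (Fin 8) ℝ :=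
  Matrix.of fun i j => (Matrix.trace (Q i * U * Q j * Uᴴ)).re

/-- The top-left 4×4 quadrant Û₊₊. -/
def blockPP (A : Matrix (Fin 8) (Fin 8) ℝ) : Matrix (Fin 4) (Fin 4) ℝ :=
  Matrix.of fun i j => A ⟨i.val, by omega⟩ ⟨j.val, by omega⟩

/-- The top-right 4×4 quadrant Û₊₋. -/
def blockPM (A : Matrix (Fin 8) (Fin 8) ℝ) : Matrix (Fin 4) (Fin 4) ℝ :=
  Matrix.of fun i j => A ⟨i.val, by omega⟩ ⟨j.val + 4, by omega⟩

/-- The bottom-left 4×4 quadrant Û₋₊. -/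
def blockMP (A : Matrix (Fin 8) (Fin 8) ℝ) : Matrix (Fin 4) (Fin 4) ℝ :=
  Matrix.of fun i j => A ⟨i.val + 4, by omega⟩ ⟨j.val, by omega⟩

/-- The bottom-right 4×4 quadrant Û₋₋. -/
def blockMM (A : Matrix (Fin 8) (Fin 8) ℝ) : Matrix (Fin 4) (Fin 4) ℝ :=
  Matrix.of fun i j => A ⟨i.val + 4, by omega⟩ ⟨j.val + 4, by omega⟩

/-- α = sin(2π/9). -/
def αR : ℝ := Real.sin (2 * Real.pi / 9)

/-- The ring ℤ[α]: the subring of ℝ generated by 1/2 and α. -/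
def Zα : Subring ℝ := Subring.closure {1/2, αR}

/-- The ring ℤ[1/2, 1/α]: the subring of ℝ generated by 1/2, α and α⁻¹. -/
def Zhα : Subring ℝ := Subring.closure {1/2, αR, αR⁻¹}

lemma alpha_mem_Zα : αR ∈ Zα := Subring.subset_closure (by simp)


section Statement18Aux
open Polynomial
open Polynomial


lemma alphaF : 64*αR^6 - 96*αR^4 + 36*αR^2 - 3 = 0 := by
  have h1 := Real.sin_three_mul (2*Real.pi/9)
  have h2 : (3:ℝ) * (2*Real.pi/9) = Real.pi - Real.pi/3 := by ring
  rw [h2, Real.sin_pi_sub, Real.sin_pi_div_three] at h1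
  have h3 : Real.sqrt 3 ^ 2 = 3 := Real.sq_sqrt (by norm_num)
  have h4 : (3*αR - 4*αR^3)^2 = 3/4 := by
    rw [αR, ← h1, div_pow, h3]; norm_num
  linear_combination 4 * h4

def Fp : Polynomial ℤ := C 64 * X^6 - C 96 * X^4 + C 36 * X^2 - C 3

lemma Fp_natDegree : Fp.natDegree = 6 := by unfold Fp; compute_degree!

lemma Fp_coeff0 : Fp.coeff 0 = -3 := by simp [Fp, coeff_X_pow]

lemma Fp_coeff6 : Fp.coeff 6 = 64 := by simp [Fp, coeff_X_pow]

lemma Fp_prim : Fp.IsPrimitive := by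
  intro r hr
  have h0 := (C_dvd_iff_dvd_coeff r Fp).mp hr 0
  have h6 := (C_dvd_iff_dvd_coeff r Fp).mp hr 6
  rw [Fp_coeff0] at h0; rw [Fp_coeff6] at h6
  have : r ∣ 1 := by
    have : (1:ℤ) = 64 + 21 * (-3) := by norm_num
    rw [this]; exact dvd_add h6 (h0.mul_left 21)
  exact isUnit_of_dvd_one this

lemma Fp_irred : Irreducible Fp := by
  have hprime : (Ideal.span {(3:ℤ)}).IsPrime :=
    (Ideal.span_singleton_prime (by norm_num)).mpr Int.prime_three
  have heis : Fp.IsEisensteinAt (Ideal.span {(3:ℤ)}) := by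
    constructor
    · rw [Polynomial.leadingCoeff, Fp_natDegree, Fp_coeff6, Ideal.mem_span_singleton]
      norm_num
    · intro n hn
      rw [Fp_natDegree] at hn
      rw [Ideal.mem_span_singleton]
      interval_cases n <;> simp [Fp, coeff_X_pow] <;> norm_num
    · rw [Fp_coeff0, Ideal.span_singleton_pow, Ideal.mem_span_singleton]
      norm_num
  exact heis.irreducible hprime Fp_prim (by rw [Fp_natDegree]; norm_num)

lemma Fp_root : Polynomial.aeval αR Fp = 0 := by
  simp only [Fp, map_sub, map_add, _root_.map_mul, map_pow, aeval_C, aeval_X, map_intCast,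
    map_ofNat, algebraMap_int_eq, eq_intCast]
  linear_combination alphaF

lemma key (p : Polynomial ℤ) (hp : Polynomial.aeval αR p = 0) : (3:ℤ) ∣ p.coeff 0 := by
  rcases eq_or_ne p 0 with rfl | hne
  · simp
  have hcont : p.content ≠ 0 := by simpa [content_eq_zero_iff] using hne
  have hc : p = C p.content * p.primPart := p.eq_C_content_mul_primPart
  have hpp0 : Polynomial.aeval αR p.primPart = 0 := by
    have h := hp
    rw [hc] at h
    simp only [_root_.map_mul, aeval_C, map_intCast, algebraMap_int_eq, eq_intCast] at h
    rcases mul_eq_zero.mp h with h' | h'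
    · exact absurd (Int.cast_injective (α := ℝ) (by simpa using h')) hcont
    · exact h'
  -- over ℚ
  have FQ_irred : Irreducible (Fp.map (Int.castRingHom ℚ)) :=
    (Polynomial.IsPrimitive.Int.irreducible_iff_irreducible_map_cast Fp_prim).mp Fp_irred
  have FQ_root : Polynomial.aeval αR (Fp.map (Int.castRingHom ℚ)) = 0 := by
    rw [show (Int.castRingHom ℚ) = algebraMap ℤ ℚ from rfl, aeval_map_algebraMap]
    exact Fp_root
  have pp_rootQ : Polynomial.aeval αR (p.primPart.map (Int.castRingHom ℚ)) = 0 := by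
    rw [show (Int.castRingHom ℚ) = algebraMap ℤ ℚ from rfl, aeval_map_algebraMap]
    exact hpp0
  have hmin := minpoly.eq_of_irreducible FQ_irred FQ_root
  have hFdvd : Fp.map (Int.castRingHom ℚ) ∣ minpoly ℚ αR := ⟨C ((Fp.map (Int.castRingHom ℚ)).leadingCoeff)⁻¹, hmin.symm⟩
  have hdvdQ : Fp.map (Int.castRingHom ℚ) ∣ p.primPart.map (Int.castRingHom ℚ) :=
    dvd_trans hFdvd (minpoly.dvd ℚ αR pp_rootQ)
  have hdvdZ : Fp ∣ p.primPart :=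
    (Polynomial.IsPrimitive.Int.dvd_iff_map_cast_dvd_map_cast Fp p.primPart Fp_prim
      ).mpr hdvdQ
  obtain ⟨q, hq⟩ := hdvdZ
  have : p.coeff 0 = p.content * (-3 * q.coeff 0) := by
    conv_lhs => rw [hc, hq]
    rw [mul_coeff_zero, mul_coeff_zero, coeff_C, Fp_coeff0]
    simp
  rw [this]
  exact ⟨p.content * (- q.coeff 0), by ring⟩
open Polynomial



lemma aeval_mem_Zα (p : Polynomial ℤ) : Polynomial.aeval αR p ∈ Zα := by
  induction p using Polynomial.induction_on with
  | C a => simpa using intCast_mem Zα a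
  | add p q hp hq => rw [map_add]; exact add_mem hp hq
  | monomial n a _ =>
      rw [_root_.map_mul, map_pow, aeval_X, aeval_C]
      exact mul_mem (by simpa using intCast_mem Zα a) (pow_mem alpha_mem_Zα _)

lemma half_mem_Zα : (1/2 : ℝ) ∈ Zα := Subring.subset_closure (by simp)

lemma mem_Zα_iff {x : ℝ} :
    x ∈ Zα ↔ ∃ (n : ℕ) (p : Polynomial ℤ), 2^n * x = Polynomial.aeval αR p := by
  constructor
  · intro hx
    induction hx using Subring.closure_induction with
    | mem y hy =>
        rcases hy with hy | hy
        · exact ⟨1, 1, by rw [hy]; simp⟩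
        · exact ⟨0, X, by rw [Set.mem_singleton_iff.mp hy]; simp⟩
    | zero => exact ⟨0, 0, by simp⟩
    | one => exact ⟨0, 1, by simp⟩
    | add x y hx hy ihx ihy =>
        obtain ⟨n, p, hp⟩ := ihx
        obtain ⟨m, q, hq⟩ := ihy
        refine ⟨n + m, C (2^m) * p + C (2^n) * q, ?_⟩
        rw [map_add, _root_.map_mul, _root_.map_mul, aeval_C, aeval_C]
        simp only [algebraMap_int_eq, eq_intCast]
        push_cast
        rw [pow_add]
        linear_combination (2:ℝ)^m * hp + (2:ℝ)^n * hq
    | neg x hx ihx =>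
        obtain ⟨n, p, hp⟩ := ihx
        exact ⟨n, -p, by rw [map_neg]; linear_combination -hp⟩
    | mul x y hx hy ihx ihy =>
        obtain ⟨n, p, hp⟩ := ihx
        obtain ⟨m, q, hq⟩ := ihy
        refine ⟨n + m, p * q, ?_⟩
        rw [_root_.map_mul, ← hp, ← hq, pow_add]; ring
  · rintro ⟨n, p, hp⟩
    have hx : x = (1/2 : ℝ)^n * (2^n * x) := by
      rw [← mul_assoc, ← mul_pow]; norm_num
    rw [hx, hp]
    exact mul_mem (pow_mem half_mem_Zα n) (aeval_mem_Zα p)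

lemma exists_rep (x : Zα) :
    ∃ np : ℕ × Polynomial ℤ, 2^np.1 * (x:ℝ) = Polynomial.aeval αR np.2 := by
  obtain ⟨n, p, h⟩ := mem_Zα_iff.mp x.2
  exact ⟨(n, p), h⟩

def rep (x : Zα) : ℕ × Polynomial ℤ := Classical.choose (exists_rep x)

lemma rep_spec (x : Zα) : 2^(rep x).1 * (x:ℝ) = Polynomial.aeval αR (rep x).2 :=
  Classical.choose_spec (exists_rep x)

def φfun (x : Zα) : ZMod 3 := 2^(rep x).1 * (((rep x).2.coeff 0 : ℤ) : ZMod 3)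

lemma two_pow_self (n : ℕ) : (2:ZMod 3)^n * (2:ZMod 3)^n = 1 := by
  rw [← mul_pow, show (2*2 : ZMod 3) = 1 from rfl, one_pow]

lemma φfun_eq {x : Zα} {n : ℕ} {p : Polynomial ℤ}
    (hp : 2^n * (x:ℝ) = Polynomial.aeval αR p) :
    φfun x = 2^n * ((p.coeff 0 : ℤ) : ZMod 3) := by
  set m := (rep x).1 with hm
  set q := (rep x).2 with hqq
  have hq : 2^m * (x:ℝ) = Polynomial.aeval αR q := rep_spec x
  have h0 : Polynomial.aeval αR (C ((2:ℤ)^n) * q - C ((2:ℤ)^m) * p) = 0 := by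
    rw [map_sub, _root_.map_mul, _root_.map_mul, aeval_C, aeval_C]
    simp only [algebraMap_int_eq, eq_intCast]
    push_cast
    rw [← hq, ← hp]; ring
  have h3 : (3:ℤ) ∣ 2^n * q.coeff 0 - 2^m * p.coeff 0 := by
    have := key _ h0
    simpa only [coeff_sub, coeff_C_mul] using this
  have e : (2:ZMod 3)^n * ((q.coeff 0 : ℤ) : ZMod 3) = 2^m * ((p.coeff 0 : ℤ) : ZMod 3) := by
    have := (ZMod.intCast_zmod_eq_zero_iff_dvd _ 3).mpr h3
    push_cast at this
    linear_combination this
  show (2:ZMod 3)^m * ((q.coeff 0 : ℤ) : ZMod 3) = 2^n * ((p.coeff 0 : ℤ) : ZMod 3)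
  linear_combination (2:ZMod 3)^n * (2:ZMod 3)^m * e
    - ((2:ZMod 3)^m * ((q.coeff 0 : ℤ) : ZMod 3)) * two_pow_self n
    + ((2:ZMod 3)^n * ((p.coeff 0 : ℤ) : ZMod 3)) * two_pow_self m

def φ : Zα →+* ZMod 3 where
  toFun := φfun
  map_one' := by
    have h : (2:ℝ)^0 * ((1:Zα):ℝ) = Polynomial.aeval αR (1 : Polynomial ℤ) := by simp
    rw [φfun_eq h]; simp
  map_zero' := by
    show φfun 0 = 0
    have h : (2:ℝ)^0 * ((0:Zα):ℝ) = Polynomial.aeval αR (0 : Polynomial ℤ) := by simp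
    rw [φfun_eq h]; simp
  map_mul' x y := by
    show φfun (x * y) = φfun x * φfun y
    obtain ⟨n, p, hp⟩ := mem_Zα_iff.mp x.2
    obtain ⟨m, q, hq⟩ := mem_Zα_iff.mp y.2
    have h : (2:ℝ)^(n+m) * (((x*y):Zα):ℝ) = Polynomial.aeval αR (p * q) := by
      push_cast
      rw [_root_.map_mul, ← hp, ← hq, pow_add]; ring
    rw [φfun_eq h, φfun_eq hp, φfun_eq hq, mul_coeff_zero]
    push_cast
    ring
  map_add' x y := by
    show φfun (x + y) = φfun x + φfun y
    obtain ⟨n, p, hp⟩ := mem_Zα_iff.mp x.2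
    obtain ⟨m, q, hq⟩ := mem_Zα_iff.mp y.2
    have h : (2:ℝ)^(n+m) * (((x+y):Zα):ℝ) = Polynomial.aeval αR (C (2^m) * p + C (2^n) * q) := by
      push_cast
      rw [map_add, _root_.map_mul, _root_.map_mul, aeval_C, aeval_C]
      simp only [algebraMap_int_eq, eq_intCast]
      push_cast
      rw [pow_add]
      linear_combination (2:ℝ)^m * hp + (2:ℝ)^n * hq
    rw [φfun_eq h, φfun_eq hp, φfun_eq hq]
    simp only [coeff_add, coeff_C_mul]
    push_cast
    linear_combination ((2:ZMod 3)^n * ((p.coeff 0 : ℤ) : ZMod 3)) * two_pow_self m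
      + ((2:ZMod 3)^m * ((q.coeff 0 : ℤ) : ZMod 3)) * two_pow_self n

lemma φ_surj : Function.Surjective φ := by
  intro c
  refine ⟨((c.val : ℕ) : Zα), ?_⟩
  rw [map_natCast]
  exact ZMod.natCast_rightInverse c

lemma αR_pos : 0 < αR := by
  rw [αR]
  apply Real.sin_pos_of_pos_of_lt_pi
  · positivity
  · nlinarith [Real.pi_pos]

lemma φ_ker : RingHom.ker φ = Ideal.span {(⟨αR, alpha_mem_Zα⟩ : Zα)} := by
  apply le_antisymm
  · intro x hx
    rw [RingHom.mem_ker] at hx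
    obtain ⟨n, p, hp⟩ := mem_Zα_iff.mp x.2
    have h0 : φfun x = 2^n * ((p.coeff 0 : ℤ) : ZMod 3) := φfun_eq hp
    have hz : ((p.coeff 0 : ℤ) : ZMod 3) = 0 := by
      have hx' : (2:ZMod 3)^n * ((p.coeff 0 : ℤ) : ZMod 3) = 0 := by
        rw [← h0]; exact hx
      have := congrArg (fun t => (2:ZMod 3)^n * t) hx'
      simpa [← mul_assoc, two_pow_self n] using this
    have hdvd : (3:ℤ) ∣ p.coeff 0 := (ZMod.intCast_zmod_eq_zero_iff_dvd _ 3).mp hz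
    obtain ⟨t, ht⟩ := hdvd
    -- x = αR * c
    have hu : αR * (64*αR^5 - 96*αR^3 + 36*αR) = 3 := by
      linear_combination alphaF
    set u : ℝ := 64*αR^5 - 96*αR^3 + 36*αR with hu'
    have humem : u ∈ Zα := by
      have hue : u = Polynomial.aeval αR ((C 64 * X^5 - C 96 * X^3 + C 36 * X : Polynomial ℤ)) := by
        simp only [map_sub, map_add, _root_.map_mul, map_pow, aeval_C, aeval_X, map_ofNat,
          map_intCast, algebraMap_int_eq, eq_intCast]
        exact hu'
      rw [hue]; exact aeval_mem_Zα _
    have hdivX : Polynomial.aeval αR p.divX ∈ Zα := aeval_mem_Zα _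
    set c : ℝ := (1/2:ℝ)^n * ((t:ℝ) * u + Polynomial.aeval αR p.divX) with hc
    have hcmem : c ∈ Zα := by
      apply mul_mem (pow_mem half_mem_Zα n)
      exact add_mem (mul_mem (intCast_mem Zα t) humem) hdivX
    have hxc : (x:ℝ) = αR * c := by
      have hsplit : Polynomial.aeval αR p = αR * Polynomial.aeval αR p.divX + (p.coeff 0 : ℝ) := by
        conv_lhs => rw [← p.X_mul_divX_add]
        rw [map_add, _root_.map_mul, aeval_X, aeval_C]
        simp [algebraMap_int_eq]
      have h2n : ((2:ℝ)^n) ≠ 0 := by positivity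
      have hone : (2:ℝ)^n * (1/2:ℝ)^n = 1 := by rw [← mul_pow]; norm_num
      have htR : ((p.coeff 0 : ℤ):ℝ) = 3*(t:ℝ) := by exact_mod_cast congrArg (fun z : ℤ => (z:ℝ)) ht
      apply mul_left_cancel₀ h2n
      rw [hc]
      linear_combination hp + hsplit - (t:ℝ)*hu
        - (αR*((t:ℝ)*u + Polynomial.aeval αR p.divX))*hone + htR
    rw [Ideal.mem_span_singleton]
    exact ⟨⟨c, hcmem⟩, Subtype.ext hxc⟩
  · rw [Ideal.span_singleton_le_iff_mem, RingHom.mem_ker]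
    have h : (2:ℝ)^0 * ((⟨αR, alpha_mem_Zα⟩ : Zα):ℝ) = Polynomial.aeval αR (X : Polynomial ℤ) := by simp
    show φfun _ = 0
    rw [φfun_eq h]; simp

lemma zmod3_field : True := trivial

end Statement18Aux

/-- In the ring ℤ[α], the principal ideal (α) is maximal and
ℤ[α]/(α) ≅ ℤ/3ℤ. Consequently, for q ∈ ℤ[1/2,1/α] and k ≥ 1 a denominator exponent
of q, k is the least denominator exponent of q if and only if the image of α^k·q in
ℤ[α]/(α) is nonzero. -/
theorem residue_ring_and_LDE_criterion :
    (Ideal.span {(⟨αR, alpha_mem_Zα⟩ : Zα)}).IsMaximal ∧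
    Nonempty ((Zα ⧸ Ideal.span {(⟨αR, alpha_mem_Zα⟩ : Zα)}) ≃+* ZMod 3) ∧
    (∀ q : ℝ, q ∈ Zhα → ∀ k : ℕ, 1 ≤ k → ∀ h : αR ^ k * q ∈ Zα,
      (IsLeast {m : ℕ | αR ^ m * q ∈ Zα} k ↔
        Ideal.Quotient.mk (Ideal.span {(⟨αR, alpha_mem_Zα⟩ : Zα)})
          (⟨αR ^ k * q, h⟩ : Zα) ≠ 0)) := by
  haveI : Fact (Nat.Prime 3) := ⟨by norm_num⟩
  refine ⟨?_, ?_, ?_⟩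
  · rw [← φ_ker]; exact RingHom.ker_isMaximal_of_surjective φ φ_surj
  · exact ⟨(Ideal.quotEquivOfEq φ_ker.symm).trans (RingHom.quotientKerEquivOfSurjective φ_surj)⟩
  · intro q hq k hk h
    have hα : αR ≠ 0 := ne_of_gt αR_pos
    have hpow : αR ^ k = αR * αR ^ (k-1) := by
      conv_lhs => rw [← Nat.sub_add_cancel hk]
      rw [pow_succ]; ring
    have hdvd : ((⟨αR, alpha_mem_Zα⟩ : Zα) ∣ (⟨αR ^ k * q, h⟩ : Zα)) ↔ αR ^ (k-1) * q ∈ Zα := by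
      constructor
      · rintro ⟨c, hc⟩
        have hc' : αR ^ k * q = αR * (c:ℝ) := congrArg Subtype.val hc
        have hce : (c:ℝ) = αR ^ (k-1) * q := by
          apply mul_left_cancel₀ hα
          rw [← hc', hpow]; ring
        rw [← hce]; exact c.2
      · intro hm
        exact ⟨⟨_, hm⟩, Subtype.ext (by show αR ^ k * q = αR * (αR^(k-1)*q); rw [hpow]; ring)⟩
    rw [ne_eq, Ideal.Quotient.eq_zero_iff_mem, Ideal.mem_span_singleton, hdvd]
    constructor
    · intro hL hmem
      have hle : k ≤ k - 1 := hL.2 hmem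
      omega
    · intro hnot
      refine ⟨h, fun m hm => ?_⟩
      by_contra hlt
      push_neg at hlt
      apply hnot
      have heq : αR ^ (k-1) * q = αR ^ (k-1-m) * (αR ^ m * q) := by
        rw [← mul_assoc, ← pow_add]
        congr 2
        omega
      rw [heq]
      exact mul_mem (pow_mem alpha_mem_Zα _) hm

end
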